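/- Let p ≥ 3 be a prime and let φ : 𝔽_p^n → 𝔽_p be a mod-p form whose support has size r. Then for every y ∈ 𝔽_p, the probability ℙ_{x∈{0,1}^n}(φ(x) = y) is an integer multiple of 2^{−r}, and consequently |ℙ_{x∈{0,1}^n}(φ(x) = y) − 1/p| ≥ 1/(2^r·p). -/

import Mathlib

open Finset

/-- The support of a mod-p form given by its coefficient vector. -/
def supp {p n : ℕ} (φ : Fin n → ZMod p) : Finset (Fin n) :=
  Finset.univ.filter fun i => φ i ≠ 0

/-- Evaluation of a mod-p form (given by coefficients) at a point. -/
def evalForm {p n : ℕ} (φ x : Fin n → ZMod p) : ZMod p := ∑ i, φ i * x i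

/-- The sumset a₁S + ⋯ + a_mS. -/
def sumsetSub {p m : ℕ} (a : Fin m → ZMod p) (S : Finset (ZMod p)) : Finset (ZMod p) :=
  (Fintype.piFinset fun _ : Fin m => S).image fun s => ∑ i, a i * s i

/-- L(S,E): smallest L such that for all nonzero a₁,…,a_L the sumset a₁S+⋯+a_LS ⊄ E. -/
noncomputable def LSE {p : ℕ} (S E : Finset (ZMod p)) : ℕ :=
  sInf {L : ℕ | ∀ a : Fin L → ZMod p, (∀ i, a i ≠ 0) → ¬ sumsetSub a S ⊆ E}

/-- β(p,S) = |S|^{-⌈(p-1)/(|S|-1)⌉}. -/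
noncomputable def betaPS (p : ℕ) (S : Finset (ZMod p)) : ℝ :=
  ((S.card : ℝ) ^ ⌈((p : ℝ) - 1) / ((S.card : ℝ) - 1)⌉₊)⁻¹

lemma supp_card_succ {p n : ℕ} (φ : Fin (n+1) → ZMod p) :
    (supp φ).card = (if φ 0 = 0 then 0 else 1) + (supp (Fin.tail φ)).card := by
  simp [supp, Finset.card_filter, Fin.sum_univ_succ, Fin.tail]
  convert (Finset.card_filter (fun i : Fin n => ¬φ i.succ = 0) univ).symm using 2 with i
  · simp [ite_not]
  · rfl

lemma supp_card_le {p n : ℕ} (φ : Fin n → ZMod p) : (supp φ).card ≤ n :=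
  (Finset.card_filter_le _ _).trans_eq (by simp)

lemma piFinset_succ_eq {p n : ℕ} (S : Finset (ZMod p)) :
    (Fintype.piFinset fun _ : Fin (n+1) => S)
      = (S ×ˢ Fintype.piFinset fun _ : Fin n => S).map (Fin.consEquiv fun _ => ZMod p).toEmbedding := by
  ext f
  simp only [Fintype.mem_piFinset, Finset.mem_map, Finset.mem_product, Equiv.coe_toEmbedding,
    Prod.exists]
  constructor
  · intro h
    exact ⟨f 0, Fin.tail f, ⟨h 0, fun i => h i.succ⟩, by simp [Fin.consEquiv]⟩
  · rintro ⟨a, b, ⟨ha, hb⟩, rfl⟩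
    intro i
    refine Fin.cases ?_ ?_ i <;> simp [Fin.consEquiv, ha, hb]

lemma eval_cons {p n : ℕ} (φ : Fin (n+1) → ZMod p) (a : ZMod p) (b : Fin n → ZMod p) :
    evalForm φ (Fin.cons a b) = φ 0 * a + evalForm (Fin.tail φ) b := by
  simp [evalForm, Fin.sum_univ_succ, Fin.tail]

lemma card_succ {p n : ℕ} (φ : Fin (n+1) → ZMod p) (y : ZMod p) :
    ((Fintype.piFinset fun _ : Fin (n+1) => ({0, 1} : Finset (ZMod p))).filter
        fun x => evalForm φ x = y).card
      = ∑ a ∈ ({0, 1} : Finset (ZMod p)),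
        ((Fintype.piFinset fun _ : Fin n => ({0, 1} : Finset (ZMod p))).filter
          fun x => evalForm (Fin.tail φ) x = y - φ 0 * a).card := by
  rw [piFinset_succ_eq, Finset.filter_map, Finset.card_map]
  rw [Finset.card_filter, Finset.sum_product]
  congr 1 with a
  rw [Finset.card_filter]
  refine Finset.sum_congr rfl fun b _ => ?_
  have hc : evalForm φ ((Fin.consEquiv fun _ => ZMod p) (a, b))
      = φ 0 * a + evalForm (Fin.tail φ) b := eval_cons φ a b
  congr 1
  simp only [Equiv.coe_toEmbedding, Function.comp_apply, eq_sub_iff_add_eq']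
  rw [hc]

lemma key {p : ℕ} (h01 : (0 : ZMod p) ≠ 1) :
    ∀ (n : ℕ) (φ : Fin n → ZMod p) (y : ZMod p), ∃ m : ℕ,
      ((Fintype.piFinset fun _ : Fin n => ({0, 1} : Finset (ZMod p))).filter
        fun x => evalForm φ x = y).card = m * 2 ^ (n - (supp φ).card) := by
  intro n
  induction n with
  | zero => intro φ y; exact ⟨_, (mul_one _).symm⟩
  | succ n ih =>
    intro φ y
    obtain ⟨m₀, h₀⟩ := ih (Fin.tail φ) y
    obtain ⟨m₁, h₁⟩ := ih (Fin.tail φ) (y - φ 0)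
    have hr : (supp (Fin.tail φ)).card ≤ n := supp_card_le _
    rw [card_succ, Finset.sum_pair h01]
    by_cases h : φ 0 = 0
    · refine ⟨m₀, ?_⟩
      rw [supp_card_succ, if_pos h]
      simp only [h, zero_mul, sub_zero, h₀]
      have : n + 1 - (0 + (supp (Fin.tail φ)).card) = (n - (supp (Fin.tail φ)).card) + 1 := by
        omega
      rw [this, pow_succ]
      ring
    · refine ⟨m₀ + m₁, ?_⟩
      rw [supp_card_succ, if_neg h]
      simp only [mul_zero, sub_zero, mul_one, h₀, h₁]
      have : n + 1 - (1 + (supp (Fin.tail φ)).card) = n - (supp (Fin.tail φ)).card := by omega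
      rw [this]
      ring

theorem stmt_16 {p n : ℕ} (hp : p.Prime) (hp3 : 3 ≤ p) (φ : Fin n → ZMod p) (y : ZMod p) :
    (∃ m : ℕ,
      (((Fintype.piFinset fun _ : Fin n => ({0, 1} : Finset (ZMod p))).filter
          fun x => evalForm φ x = y).card : ℝ) / (2 : ℝ) ^ n
        = (m : ℝ) / (2 : ℝ) ^ (supp φ).card) ∧
    ((2 : ℝ) ^ (supp φ).card * (p : ℝ))⁻¹ ≤
      |(((Fintype.piFinset fun _ : Fin n => ({0, 1} : Finset (ZMod p))).filter
          fun x => evalForm φ x = y).card : ℝ) / (2 : ℝ) ^ n - (p : ℝ)⁻¹| := by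
  haveI : Fact p.Prime := ⟨hp⟩
  have h01 : (0 : ZMod p) ≠ 1 := zero_ne_one
  obtain ⟨m, hm⟩ := key h01 n φ y
  set r := (supp φ).card with hrdef
  have hr : r ≤ n := supp_card_le _
  have h2r : (0:ℝ) < 2 ^ r := by positivity
  have h2n : (0:ℝ) < 2 ^ n := by positivity
  have hpR : (0:ℝ) < p := by positivity
  have hsplit : (2:ℝ) ^ n = 2 ^ (n - r) * 2 ^ r := by
    rw [← pow_add]; congr 1; omega
  have hNm : (((Fintype.piFinset fun _ : Fin n => ({0, 1} : Finset (ZMod p))).filter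
      fun x => evalForm φ x = y).card : ℝ) = m * 2 ^ (n - r) := by
    rw [hm]; push_cast; ring
  have hmain : (((Fintype.piFinset fun _ : Fin n => ({0, 1} : Finset (ZMod p))).filter
      fun x => evalForm φ x = y).card : ℝ) / (2:ℝ) ^ n = (m : ℝ) / 2 ^ r := by
    rw [hNm, hsplit, div_eq_div_iff (by positivity) (by positivity)]
    ring
  refine ⟨⟨m, hmain⟩, ?_⟩
  rw [hmain]
  have hne : m * p ≠ 2 ^ r := by
    intro hmp
    have hdvd : p ∣ 2 ^ r := hmp ▸ dvd_mul_left p m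
    have := hp.dvd_of_dvd_pow (n := r) (m := 2) hdvd
    have := Nat.le_of_dvd (by norm_num) this
    omega
  have habs : (1:ℝ) ≤ |(m : ℝ) * p - 2 ^ r| := by
    have h0 : ((m : ℤ) * p - 2 ^ r) ≠ 0 := by
      intro h
      exact hne (by exact_mod_cast sub_eq_zero.mp h)
    have h1 := Int.one_le_abs h0
    exact_mod_cast h1
  have heq : (m : ℝ) / 2 ^ r - (p:ℝ)⁻¹ = ((m : ℝ) * p - 2 ^ r) / (2 ^ r * p) := by
    field_simp
    try ring
  rw [heq, abs_div, abs_of_pos (by positivity : (0:ℝ) < 2 ^ r * p)]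
  rw [inv_eq_one_div]
  gcongr
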